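/- arXiv:2104.02130 — 4 statements merged into one kernel-verified Lean document; each statement's English description precedes it below -/
import Mathlib

section
/- Let A be a C*-algebra and let τ : A → ℂ be a bounded linear functional. Assume that for j = 1, 2 there are a *-representation π_j : A → B(H_j) on a complex Hilbert space H_j and vectors ξ_j, η_j ∈ H_j with ‖ξ_j‖ = ‖η_j‖ = ‖τ‖^{1/2}, such that ξ_j is cyclic for π_j and ⟨π_1(t)ξ_1, η_1⟩ = τ(t) = ⟨π_2(t)ξ_2, η_2⟩ for every t ∈ A. Then there is a unitary operator U : H_1 → H_2 such that Uξ_1 = ξ_2, Uη_1 = η_2, and Uπ_1(t)U* = π_2(t) for every t ∈ A. -/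
open Filter Topology

section auxiliary

variable {A : Type*} [NonUnitalNormedRing A] [StarRing A] [CStarRing A]
    [NormedSpace ℂ A] [IsScalarTower ℂ A A] [SMulCommClass ℂ A A] [StarModule ℂ A]
    [CompleteSpace A]
    {H : Type*} [NormedAddCommGroup H] [InnerProductSpace ℂ H] [CompleteSpace H]

set_option linter.unusedSectionVars false

lemma aux_adj (π : A →⋆ₙₐ[ℂ] (H →L[ℂ] H)) (s : A) (x y : H) :
    (inner ℂ (π s x) y : ℂ) = inner ℂ x (π (star s) y) := by
  have h : π (star s) = ContinuousLinearMap.adjoint (π s) := by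
    rw [map_star, ContinuousLinearMap.star_eq_adjoint]
  rw [h, ContinuousLinearMap.adjoint_inner_right]

lemma aux_conv (π : A →⋆ₙₐ[ℂ] (H →L[ℂ] H)) (r : ℝ) (hr : 0 ≤ r)
    (hπ : ∀ t : A, ‖π t‖ ≤ ‖t‖)
    (a b : H) (ha : ‖a‖ = Real.sqrt r) (hb : ‖b‖ = Real.sqrt r)
    (s : ℕ → A) (hs1 : ∀ n, ‖s n‖ ≤ 1)
    (hs2 : ∀ n, r - 1/(n+1) ≤ (inner ℂ (π (s n) a) b : ℂ).re) :
    Tendsto (fun n => π (s n) a) atTop (𝓝 b) := by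
  have hbound : ∀ n : ℕ, ‖π (s n) a - b‖ ^ 2 ≤ 2 * (1/(n+1)) := by
    intro n
    have h1 : ‖π (s n) a‖ ^ 2 ≤ r := by
      have : ‖π (s n) a‖ ≤ Real.sqrt r := by
        calc ‖π (s n) a‖ ≤ ‖π (s n)‖ * ‖a‖ := (π (s n)).le_opNorm a
        _ ≤ 1 * Real.sqrt r := by
            exact mul_le_mul (le_trans (hπ (s n)) (hs1 n)) (le_of_eq ha) (norm_nonneg _)
              zero_le_one
        _ = Real.sqrt r := one_mul _
      calc ‖π (s n) a‖ ^ 2 ≤ (Real.sqrt r) ^ 2 :=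
            pow_le_pow_left₀ (norm_nonneg _) this 2
      _ = r := Real.sq_sqrt hr
    have h2 : ‖b‖ ^ 2 = r := by rw [hb, Real.sq_sqrt hr]
    have h3 : ‖π (s n) a - b‖ ^ 2
        = ‖π (s n) a‖ ^ 2 - 2 * (inner ℂ (π (s n) a) b : ℂ).re + ‖b‖ ^ 2 := by
      have := @norm_sub_sq ℂ _ _ _ _ (π (s n) a) b
      simpa using this
    rw [h3, h2]
    have := hs2 n
    nlinarith [h1]
  rw [tendsto_iff_norm_sub_tendsto_zero]
  have hsq : Tendsto (fun n : ℕ => Real.sqrt (2 * (1/(n+1)))) atTop (𝓝 0) := by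
    have h0 : Tendsto (fun n : ℕ => 2 * (1/((n:ℝ)+1))) atTop (𝓝 0) := by
      have := tendsto_one_div_add_atTop_nhds_zero_nat (𝕜 := ℝ)
      simpa using this.const_mul 2
    have := (Real.continuous_sqrt.tendsto 0).comp h0
    simpa only [Function.comp_def, Real.sqrt_zero] using this
  refine squeeze_zero (fun n => norm_nonneg _) (fun n => ?_) hsq
  rw [Real.le_sqrt (norm_nonneg _)]
  · exact hbound n
  · positivity

lemma aux_key (π : A →⋆ₙₐ[ℂ] (H →L[ℂ] H)) (τ : A →L[ℂ] ℂ) (ξ η : H)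
    (hrep : ∀ t : A, (inner ℂ η (π t ξ) : ℂ) = τ t)
    (s : ℕ → A) (hconv : Tendsto (fun n => π (s n) η) atTop (𝓝 ξ)) (t u : A) :
    Tendsto (fun n => τ (star (s n) * (star t * u))) atTop
      (𝓝 (inner ℂ (π t ξ) (π u ξ) : ℂ)) := by
  have h1 : ∀ n, τ (star (s n) * (star t * u)) = (inner ℂ (π (t * s n) η) (π u ξ) : ℂ) := by
    intro n
    rw [← hrep (star (s n) * (star t * u))]
    have he : star (s n) * (star t * u) = star (t * s n) * u := by
      rw [star_mul, mul_assoc]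
    rw [he, map_mul, ContinuousLinearMap.mul_apply]
    exact (aux_adj π (t * s n) η (π u ξ)).symm
  have h3 : Tendsto (fun n => π (t * s n) η) atTop (𝓝 (π t ξ)) := by
    have := ((π t).continuous.tendsto ξ).comp hconv
    refine this.congr fun n => ?_
    simp [map_mul]
  have h2 : Tendsto (fun n => (inner ℂ (π (t * s n) η) (π u ξ) : ℂ)) atTop
      (𝓝 (inner ℂ (π t ξ) (π u ξ))) := h3.inner tendsto_const_nhds
  exact h2.congr fun n => (h1 n).symm

lemma aux_seq (τ : A →L[ℂ] ℂ) (n : ℕ) :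
    ∃ s : A, ‖s‖ ≤ 1 ∧ ‖τ‖ - 1/(n+1) ≤ (τ s).re := by
  by_cases hτn : ‖τ‖ ≤ 1/(n+1)
  · refine ⟨0, by simp, ?_⟩
    simp only [map_zero, Complex.zero_re]
    linarith
  · push_neg at hτn
    have hpos : (0:ℝ) < 1/(n+1) := by positivity
    obtain ⟨x, hx1, hx2⟩ := τ.exists_lt_apply_of_lt_opNorm
      (show ‖τ‖ - 1/(n+1) < ‖τ‖ by linarith)
    have hτx : τ x ≠ 0 := by
      intro h
      rw [h, norm_zero] at hx2
      linarith
    set c : ℂ := (‖τ x‖ : ℂ) / τ x with hc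
    have hcn : ‖c‖ = 1 := by
      rw [hc, norm_div, Complex.norm_real, Real.norm_eq_abs, abs_norm]
      exact div_self (norm_ne_zero_iff.mpr hτx)
    refine ⟨c • x, ?_, ?_⟩
    · rw [norm_smul, hcn, one_mul]; exact hx1.le
    · have : τ (c • x) = (‖τ x‖ : ℂ) := by
        rw [map_smul, smul_eq_mul, hc, div_mul_cancel₀ _ hτx]
      rw [this, Complex.ofReal_re]
      exact hx2.le

/-- Auxiliary: a contractive intertwiner from a cyclic vector. -/
lemma aux_clm {H₁ : Type*} [NormedAddCommGroup H₁] [InnerProductSpace ℂ H₁] [CompleteSpace H₁]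
    {H₂ : Type*} [NormedAddCommGroup H₂] [InnerProductSpace ℂ H₂] [CompleteSpace H₂]
    (π₁ : A →⋆ₙₐ[ℂ] (H₁ →L[ℂ] H₁)) (π₂ : A →⋆ₙₐ[ℂ] (H₂ →L[ℂ] H₂))
    (ξ₁ : H₁) (ξ₂ : H₂)
    (hcyc₁ : Dense (Set.range fun t : A => π₁ t ξ₁))
    (hle : ∀ t : A, ‖π₂ t ξ₂‖ ≤ ‖π₁ t ξ₁‖) :
    ∃ Φ : H₁ →L[ℂ] H₂, (∀ t : A, Φ (π₁ t ξ₁) = π₂ t ξ₂) ∧ ∀ x : H₁, ‖Φ x‖ ≤ ‖x‖ := by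
  classical
  set f : A →ₗ[ℂ] H₁ :=
    { toFun := fun t => π₁ t ξ₁
      map_add' := fun s t => by simp
      map_smul' := fun c t => by simp } with hf
  set g : A →ₗ[ℂ] H₂ :=
    { toFun := fun t => π₂ t ξ₂
      map_add' := fun s t => by simp
      map_smul' := fun c t => by simp } with hg
  have hle' : ∀ t : A, ‖g t‖ ≤ ‖f t‖ := fun t => hle t
  have hker : LinearMap.ker f ≤ LinearMap.ker g := by
    intro t ht
    rw [LinearMap.mem_ker] at ht ⊢
    have : ‖g t‖ ≤ 0 := le_trans (hle' t) (by rw [ht, norm_zero])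
    exact norm_le_zero_iff.mp this
  set D : Submodule ℂ H₁ := LinearMap.range f with hD
  set hlin : D →ₗ[ℂ] H₂ :=
    ((LinearMap.ker f).liftQ g hker).comp (f.quotKerEquivRange).symm.toLinearMap with hhlin
  have hlin_app : ∀ t : A, hlin ⟨f t, LinearMap.mem_range_self f t⟩ = g t := by
    intro t
    have h1 : (f.quotKerEquivRange) (Submodule.Quotient.mk t) =
        ⟨f t, LinearMap.mem_range_self f t⟩ :=
      Subtype.ext (f.quotKerEquivRange_apply_mk t)
    have h2 : (f.quotKerEquivRange).symm ⟨f t, LinearMap.mem_range_self f t⟩ =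
        Submodule.Quotient.mk t := by
      rw [LinearEquiv.symm_apply_eq, h1]
    simp [hhlin, h2]
  have hlin_bound : ∀ y : D, ‖hlin y‖ ≤ 1 * ‖y‖ := by
    rintro ⟨y, hy⟩
    obtain ⟨t, rfl⟩ := hy
    rw [one_mul]
    calc ‖hlin ⟨f t, LinearMap.mem_range_self f t⟩‖ = ‖g t‖ := by rw [hlin_app]
    _ ≤ ‖f t‖ := hle' t
    _ = ‖(⟨f t, LinearMap.mem_range_self f t⟩ : D)‖ := rfl
  set h : D →L[ℂ] H₂ := hlin.mkContinuous 1 hlin_bound with hh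
  have hDd : Dense (D : Set H₁) := by
    have : (D : Set H₁) = Set.range fun t : A => π₁ t ξ₁ := LinearMap.coe_range f
    rw [this]; exact hcyc₁
  set Φ : H₁ →L[ℂ] H₂ :=
    h.extend D.subtypeL with hΦ
  have hΦ_app : ∀ t : A, Φ (π₁ t ξ₁) = π₂ t ξ₂ := by
    intro t
    have h1 : Φ (D.subtypeL ⟨f t, LinearMap.mem_range_self f t⟩) =
        h ⟨f t, LinearMap.mem_range_self f t⟩ :=
      ContinuousLinearMap.extend_eq _ hDd.denseRange_val
        isUniformEmbedding_subtype_val.isUniformInducing _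
    have h2 : h ⟨f t, LinearMap.mem_range_self f t⟩ = g t := by
      rw [hh, LinearMap.mkContinuous_apply, hlin_app]
    exact h1.trans h2
  refine ⟨Φ, hΦ_app, ?_⟩
  have hclosed : IsClosed {x : H₁ | ‖Φ x‖ ≤ ‖x‖} :=
    isClosed_le (Φ.continuous.norm) continuous_norm
  intro x
  have hsub : Set.range (fun t : A => π₁ t ξ₁) ⊆ {x : H₁ | ‖Φ x‖ ≤ ‖x‖} := by
    rintro _ ⟨t, rfl⟩
    simp only [Set.mem_setOf_eq, hΦ_app t]
    exact hle t
  exact hclosed.closure_subset_iff.mpr hsub (hcyc₁ x)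

end auxiliary

/-- Lemma 2.2 of the paper: uniqueness of Riesz-type representations of a bounded
linear functional on a C*-algebra.  If `(π₁, ξ₁, η₁)` and `(π₂, ξ₂, η₂)` both represent
the functional `τ`, with `ξⱼ` cyclic and `‖ξⱼ‖ = ‖ηⱼ‖ = ‖τ‖ ^ (1/2)`, then there is a
unitary `U : H₁ → H₂` with `U ξ₁ = ξ₂`, `U η₁ = η₂` and `U π₁(t) U* = π₂(t)` for all `t`.
(In Mathlib's convention the inner ℂ product is conjugate-linear in the first variable, so
`inner ℂ ηⱼ (πⱼ t ξⱼ)` is the paper's `⟨πⱼ(t)ξⱼ, ηⱼ⟩`, linear in the first variable.) -/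
theorem stmt_2 (A : Type*) [NonUnitalNormedRing A] [StarRing A] [CStarRing A]
    [NormedSpace ℂ A] [IsScalarTower ℂ A A] [SMulCommClass ℂ A A] [StarModule ℂ A]
    [CompleteSpace A]
    (H₁ : Type*) [NormedAddCommGroup H₁] [InnerProductSpace ℂ H₁] [CompleteSpace H₁]
    (H₂ : Type*) [NormedAddCommGroup H₂] [InnerProductSpace ℂ H₂] [CompleteSpace H₂]
    (π₁ : A →⋆ₙₐ[ℂ] (H₁ →L[ℂ] H₁)) (π₂ : A →⋆ₙₐ[ℂ] (H₂ →L[ℂ] H₂))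
    (τ : A →L[ℂ] ℂ)
    (ξ₁ η₁ : H₁) (ξ₂ η₂ : H₂)
    (hξ₁ : ‖ξ₁‖ = Real.sqrt ‖τ‖) (hη₁ : ‖η₁‖ = Real.sqrt ‖τ‖)
    (hξ₂ : ‖ξ₂‖ = Real.sqrt ‖τ‖) (hη₂ : ‖η₂‖ = Real.sqrt ‖τ‖)
    (hcyc₁ : Dense (Set.range fun t : A => π₁ t ξ₁))
    (hcyc₂ : Dense (Set.range fun t : A => π₂ t ξ₂))
    (hrep₁ : ∀ t : A, (inner ℂ η₁ (π₁ t ξ₁) : ℂ) = τ t)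
    (hrep₂ : ∀ t : A, τ t = (inner ℂ η₂ (π₂ t ξ₂) : ℂ)) :
    ∃ U : H₁ ≃ₗᵢ[ℂ] H₂, U ξ₁ = ξ₂ ∧ U η₁ = η₂ ∧
      ∀ (t : A) (x : H₁), U (π₁ t x) = π₂ t (U x) := by
  classical
  have hπ₁ : ∀ t : A, ‖π₁ t‖ ≤ ‖t‖ := by
    letI : NonUnitalCStarAlgebra A :=
      { ‹NonUnitalNormedRing A›, ‹StarRing A›, ‹CStarRing A›, ‹NormedSpace ℂ A›,
        ‹IsScalarTower ℂ A A›, ‹SMulCommClass ℂ A A›, ‹StarModule ℂ A›,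
        ‹CompleteSpace A› with }
    exact fun t => NonUnitalStarAlgHom.norm_apply_le π₁ t
  have hπ₂ : ∀ t : A, ‖π₂ t‖ ≤ ‖t‖ := by
    letI : NonUnitalCStarAlgebra A :=
      { ‹NonUnitalNormedRing A›, ‹StarRing A›, ‹CStarRing A›, ‹NormedSpace ℂ A›,
        ‹IsScalarTower ℂ A A›, ‹StarModule ℂ A›, ‹SMulCommClass ℂ A A›,
        ‹CompleteSpace A› with }
    exact fun t => NonUnitalStarAlgHom.norm_apply_le π₂ t
  have hτ0 : (0:ℝ) ≤ ‖τ‖ := norm_nonneg τ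
  have hrep₂' : ∀ t : A, (inner ℂ η₂ (π₂ t ξ₂) : ℂ) = τ t := fun t => (hrep₂ t).symm
  -- a sequence `u` on which `τ` nearly attains its norm, with real values in the limit
  choose u hu1 hu2 using aux_seq τ
  set s : ℕ → A := fun n => star (u n) with hsdef
  have hs1 : ∀ n, ‖s n‖ ≤ 1 := fun n => by
    simpa [hsdef, norm_star] using hu1 n
  have hsτ : ∀ n : ℕ, ‖τ‖ - 1/(n+1) ≤ (τ (star (s n))).re := fun n => by
    simpa [hsdef, star_star] using hu2 n
  -- `π (s n) η → ξ` in both spaces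
  have hconvξ₁ : Tendsto (fun n => π₁ (s n) η₁) atTop (𝓝 ξ₁) := by
    refine aux_conv π₁ ‖τ‖ hτ0 hπ₁ η₁ ξ₁ hη₁ hξ₁ s hs1 (fun n => ?_)
    rw [aux_adj π₁ (s n) η₁ ξ₁, hrep₁ (star (s n))]
    exact hsτ n
  have hconvξ₂ : Tendsto (fun n => π₂ (s n) η₂) atTop (𝓝 ξ₂) := by
    refine aux_conv π₂ ‖τ‖ hτ0 hπ₂ η₂ ξ₂ hη₂ hξ₂ s hs1 (fun n => ?_)
    rw [aux_adj π₂ (s n) η₂ ξ₂, hrep₂' (star (s n))]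
    exact hsτ n
  -- the key identity: inner ℂ products of the orbits of the cyclic vectors agree
  have key : ∀ t v : A, (inner ℂ (π₁ t ξ₁) (π₁ v ξ₁) : ℂ) = inner ℂ (π₂ t ξ₂) (π₂ v ξ₂) :=
    fun t v => tendsto_nhds_unique (aux_key π₁ τ ξ₁ η₁ hrep₁ s hconvξ₁ t v)
      (aux_key π₂ τ ξ₂ η₂ hrep₂' s hconvξ₂ t v)
  have hnorm : ∀ t : A, ‖π₁ t ξ₁‖ = ‖π₂ t ξ₂‖ := by
    intro t
    have h := key t t
    rw [@norm_eq_sqrt_re_inner ℂ, @norm_eq_sqrt_re_inner ℂ, h]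
  obtain ⟨Φ, hΦa, hΦle⟩ := aux_clm π₁ π₂ ξ₁ ξ₂ hcyc₁ (fun t => (hnorm t).ge)
  obtain ⟨Ψ, hΨa, hΨle⟩ := aux_clm π₂ π₁ ξ₂ ξ₁ hcyc₂ (fun t => (hnorm t).le)
  have hΨΦ : ∀ x, Ψ (Φ x) = x := by
    have hEq : Set.EqOn (⇑Ψ ∘ ⇑Φ) id (Set.range fun t : A => π₁ t ξ₁) := by
      rintro _ ⟨t, rfl⟩
      simp [Function.comp, hΦa t, hΨa t]
    have := Continuous.ext_on hcyc₁ (Ψ.continuous.comp Φ.continuous) continuous_id hEq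
    exact fun x => congrFun this x
  have hΦΨ : ∀ x, Φ (Ψ x) = x := by
    have hEq : Set.EqOn (⇑Φ ∘ ⇑Ψ) id (Set.range fun t : A => π₂ t ξ₂) := by
      rintro _ ⟨t, rfl⟩
      simp [Function.comp, hΦa t, hΨa t]
    have := Continuous.ext_on hcyc₂ (Φ.continuous.comp Ψ.continuous) continuous_id hEq
    exact fun x => congrFun this x
  have hiso : ∀ x, ‖Φ x‖ = ‖x‖ := by
    intro x
    refine le_antisymm (hΦle x) ?_
    calc ‖x‖ = ‖Ψ (Φ x)‖ := by rw [hΨΦ x]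
    _ ≤ ‖Φ x‖ := hΨle _
  set U : H₁ ≃ₗᵢ[ℂ] H₂ :=
    { toLinearEquiv := LinearEquiv.ofLinear (Φ : H₁ →ₗ[ℂ] H₂) (Ψ : H₂ →ₗ[ℂ] H₁)
        (LinearMap.ext hΦΨ) (LinearMap.ext hΨΦ)
      norm_map' := hiso } with hU
  have hUx : ∀ x : H₁, U x = Φ x := fun x => rfl
  -- intertwining
  have hint : ∀ (t : A) (x : H₁), Φ (π₁ t x) = π₂ t (Φ x) := by
    intro t
    have hEq : Set.EqOn (fun x => Φ (π₁ t x)) (fun x => π₂ t (Φ x))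
        (Set.range fun v : A => π₁ v ξ₁) := by
      rintro _ ⟨v, rfl⟩
      have h1 : π₁ t (π₁ v ξ₁) = π₁ (t * v) ξ₁ := by
        rw [map_mul, ContinuousLinearMap.mul_apply]
      have h2 : π₂ t (π₂ v ξ₂) = π₂ (t * v) ξ₂ := by
        rw [map_mul, ContinuousLinearMap.mul_apply]
      simp only [h1, hΦa v, h2, hΦa (t*v)]
    have := Continuous.ext_on hcyc₁ (Φ.continuous.comp (π₁ t).continuous)
      ((π₂ t).continuous.comp Φ.continuous) hEq
    exact fun x => congrFun this x
  -- `π (u n) ξ → η` in both spaces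
  have hconvη₁ : Tendsto (fun n => π₁ (u n) ξ₁) atTop (𝓝 η₁) := by
    refine aux_conv π₁ ‖τ‖ hτ0 hπ₁ ξ₁ η₁ hξ₁ hη₁ u hu1 (fun n => ?_)
    have h : (inner ℂ (π₁ (u n) ξ₁) η₁ : ℂ) = (starRingEnd ℂ) (τ (u n)) := by
      rw [← inner_conj_symm, hrep₁]
    rw [h]
    simpa [Complex.conj_re] using hu2 n
  have hconvη₂ : Tendsto (fun n => π₂ (u n) ξ₂) atTop (𝓝 η₂) := by
    refine aux_conv π₂ ‖τ‖ hτ0 hπ₂ ξ₂ η₂ hξ₂ hη₂ u hu1 (fun n => ?_)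
    have h : (inner ℂ (π₂ (u n) ξ₂) η₂ : ℂ) = (starRingEnd ℂ) (τ (u n)) := by
      rw [← inner_conj_symm, hrep₂' ]
    rw [h]
    simpa [Complex.conj_re] using hu2 n
  have hUη : Φ η₁ = η₂ := by
    refine tendsto_nhds_unique ?_ hconvη₂
    have := ((Φ.continuous.tendsto η₁).comp hconvη₁)
    exact this.congr fun n => hΦa (u n)
  have hUξ : Φ ξ₁ = ξ₂ := by
    refine tendsto_nhds_unique ?_ hconvξ₂
    have := ((Φ.continuous.tendsto ξ₁).comp hconvξ₁)
    refine this.congr fun n => ?_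
    show Φ (π₁ (s n) η₁) = π₂ (s n) η₂
    rw [hint (s n) η₁, hUη]
  exact ⟨U, by rw [hUx]; exact hUξ, by rw [hUx]; exact hUη,
    fun t x => by rw [hUx, hUx]; exact hint t x⟩
end

section
/- Let d ≥ 1 be an integer. For every a, b ∈ A_d and every compact operator K on 𝔉²_d, one has ‖a + b* + K‖ ≥ ‖a + b*‖; equivalently, the distance in operator norm from any element of the free disc operator system S_d to the space of compact operators on 𝔉²_d equals its operator norm. -/
noncomputable section

local notation "⟪" x ", " y "⟫" => inner (𝕜 := ℂ) x y

open Filter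

/-- A compact operator sends bounded weakly-null sequences to norm-null sequences. -/
lemma aux_compact_weak {F : Type*} [NormedAddCommGroup F] [InnerProductSpace ℂ F]
    [CompleteSpace F]
    (K : F →L[ℂ] F) (hK : IsCompactOperator K) (x : ℕ → F) (C : ℝ)
    (hC : ∀ n, ‖x n‖ ≤ C)
    (hw : ∀ y : F, Filter.Tendsto (fun n => ⟪x n, y⟫) Filter.atTop (nhds 0)) :
    Filter.Tendsto (fun n => ‖K (x n)‖) Filter.atTop (nhds 0) := by
  by_contra hcon
  rw [Metric.tendsto_atTop] at hcon
  push_neg at hcon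
  obtain ⟨ε, hε, hfreq⟩ := hcon
  obtain ⟨φ, hφ, hφε⟩ := Filter.extraction_of_frequently_atTop
    (Filter.frequently_atTop.2 hfreq)
  -- compact set containing K (x n)
  have hbdd : Bornology.IsBounded (Set.range x) := by
    apply Bornology.IsBounded.subset (Metric.isBounded_closedBall (x := (0 : F)) (r := C))
    rintro - ⟨n, rfl⟩
    simpa [Metric.mem_closedBall, dist_eq_norm] using hC n
  have hcpt : IsCompact (closure (K '' Set.range x)) :=
    IsCompactOperator.isCompact_closure_image_of_bounded (f := (K : F →ₗ[ℂ] F)) hK hbdd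
  have hmem : ∀ n, K (x (φ n)) ∈ closure (K '' Set.range x) := fun n =>
    subset_closure ⟨x (φ n), ⟨φ n, rfl⟩, rfl⟩
  obtain ⟨z, -, ψ, hψ, hlim⟩ := hcpt.tendsto_subseq hmem
  -- z is weakly null limit, hence 0
  have hz : z = 0 := by
    have h1 : ∀ v : F, ⟪z, v⟫ = 0 := by
      intro v
      have h2 : Filter.Tendsto (fun n => ⟪K (x (φ (ψ n))), v⟫) Filter.atTop (nhds ⟪z, v⟫) :=
        (hlim.inner tendsto_const_nhds)
      have h3 : Filter.Tendsto (fun n => ⟪K (x (φ (ψ n))), v⟫) Filter.atTop (nhds 0) := by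
        have h4 : ∀ n, ⟪K (x (φ (ψ n))), v⟫ = ⟪x (φ (ψ n)), ContinuousLinearMap.adjoint K v⟫ := by
          intro n
          rw [ContinuousLinearMap.adjoint_inner_right]
        simp only [h4]
        exact (hw (ContinuousLinearMap.adjoint K v)).comp ((hφ.comp hψ).tendsto_atTop)
      exact tendsto_nhds_unique h2 h3
    simpa [inner_self_eq_zero] using h1 z
  have h5 : Filter.Tendsto (fun n => ‖K (x (φ (ψ n)))‖) Filter.atTop (nhds 0) := by
    simpa [hz] using hlim.norm
  have h6 : ε ≤ (0 : ℝ) := ge_of_tendsto' h5 ?_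
  · linarith
  · intro n
    have := hφε (ψ n)
    rw [Real.dist_eq, sub_zero, abs_of_nonneg (norm_nonneg _)] at this; exact this

lemma aux_R {d : ℕ} {F : Type*} [NormedAddCommGroup F] [InnerProductSpace ℂ F] [CompleteSpace F]
    (e : HilbertBasis (FreeMonoid (Fin d)) ℂ F) (w : FreeMonoid (Fin d)) :
    ∃ R : F →ₗᵢ[ℂ] F, ∀ u, R (e u) = e (u * w) := by
  classical
  have hinj : Function.Injective (fun u : FreeMonoid (Fin d) => u * w) := mul_left_injective w
  have horth : Orthonormal ℂ (fun u => e (u * w)) :=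
    e.orthonormal.comp (fun u => u * w) hinj
  refine ⟨(horth.orthogonalFamily.linearIsometry).comp e.repr.toLinearIsometry, ?_⟩
  intro u
  have h1 : e.repr (e u) = lp.single 2 u (1 : ℂ) := e.repr_self u
  simp only [LinearIsometry.coe_comp, Function.comp_apply,
    LinearIsometryEquiv.coe_toLinearIsometry, h1,
    OrthogonalFamily.linearIsometry_apply_single]
  simp [LinearIsometry.toSpanSingleton_apply]

lemma aux_comm {d : ℕ} {F : Type*} [NormedAddCommGroup F] [InnerProductSpace ℂ F]
    [CompleteSpace F]
    (e : HilbertBasis (FreeMonoid (Fin d)) ℂ F) (L : Fin d → F →L[ℂ] F)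
    (hL : ∀ (j : Fin d) (w : FreeMonoid (Fin d)), L j (e w) = e (FreeMonoid.of j * w))
    (w : FreeMonoid (Fin d)) (R : F →ₗᵢ[ℂ] F) (hR : ∀ u, R (e u) = e (u * w))
    {x : F →L[ℂ] F} (hx : x ∈ (Algebra.adjoin ℂ (Set.range L)).topologicalClosure) :
    R.toContinuousLinearMap * x = x * R.toContinuousLinearMap := by
  set Rc := R.toContinuousLinearMap with hRc
  have hRce : ∀ u, Rc (e u) = e (u * w) := hR
  have key : (Algebra.adjoin ℂ (Set.range L)).topologicalClosure ≤
      Subalgebra.centralizer ℂ {Rc} := by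
    apply Subalgebra.topologicalClosure_minimal
    · apply Algebra.adjoin_le
      rintro - ⟨j, rfl⟩
      simp only [SetLike.mem_coe]
      rw [Subalgebra.mem_centralizer_iff]
      rintro g hg
      rw [Set.mem_singleton_iff] at hg; subst hg
      have hdense : Dense ((Submodule.span ℂ (Set.range (e : FreeMonoid (Fin d) → F))) : Set F) :=
        Submodule.dense_iff_topologicalClosure_eq_top.mpr e.dense_span
      apply ContinuousLinearMap.ext_on hdense
      rintro - ⟨u, rfl⟩
      simp only [ContinuousLinearMap.mul_apply, hRce, hL, ← mul_assoc]
    · have hset : (Subalgebra.centralizer ℂ ({Rc} : Set (F →L[ℂ] F)) : Set (F →L[ℂ] F)) =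
          {x : F →L[ℂ] F | Rc * x = x * Rc} := by
        ext x
        simp [SetLike.mem_coe, Subalgebra.mem_centralizer_iff, Set.mem_centralizer_iff]
      rw [hset]
      exact isClosed_eq (continuous_mul_left Rc) (continuous_mul_right Rc)
  have h := key hx
  rw [Subalgebra.mem_centralizer_iff] at h
  exact h Rc rfl

lemma aux_weak {d : ℕ} {F : Type*} [NormedAddCommGroup F] [InnerProductSpace ℂ F]
    [CompleteSpace F]
    (e : HilbertBasis (FreeMonoid (Fin d)) ℂ F)
    (w : ℕ → FreeMonoid (Fin d)) (hw : ∀ n, n ≤ (w n).length)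
    (R : ℕ → F →ₗᵢ[ℂ] F) (hR : ∀ n u, R n (e u) = e (u * w n))
    (ξ y : F) :
    Tendsto (fun n => ⟪R n ξ, y⟫) atTop (nhds 0) := by
  classical
  set B : ℕ → F →L[ℂ] F := fun n => ContinuousLinearMap.adjoint (R n).toContinuousLinearMap
    with hB
  have hadj : ∀ n (ζ : F), ⟪R n ζ, y⟫ = ⟪ζ, B n y⟫ := by
    intro n ζ
    rw [hB, ContinuousLinearMap.adjoint_inner_right]
    rfl
  -- the coefficient function
  set g : FreeMonoid (Fin d) → ℝ := fun v => ‖⟪e v, y⟫‖ ^ 2 with hg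
  have hg0 : ∀ v, 0 ≤ g v := fun v => sq_nonneg _
  have hgsum : Summable g := by
    have h := e.hasSum_inner_mul_inner y y
    have h2 : ∀ u, ⟪y, e u⟫ * ⟪e u, y⟫ = ((g u : ℝ) : ℂ) := by
      intro u
      have hc : ⟪y, e u⟫ = (starRingEnd ℂ) ⟪e u, y⟫ := (inner_conj_symm y (e u)).symm
      rw [hc, RCLike.conj_mul, hg]
      norm_cast
    rw [funext h2] at h
    exact Complex.summable_ofReal.mp h.summable
  -- Parseval for B n y
  have hbreak : ∀ n, HasSum (fun u => g (u * w n)) (‖B n y‖ ^ 2) := by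
    intro n
    have h := e.hasSum_inner_mul_inner (B n y) (B n y)
    have h2 : ∀ u, ⟪B n y, e u⟫ * ⟪e u, B n y⟫ = ((g (u * w n) : ℝ) : ℂ) := by
      intro u
      have h3 : ⟪e u, B n y⟫ = ⟪e (u * w n), y⟫ := by
        rw [hB, ContinuousLinearMap.adjoint_inner_right]
        show ⟪R n (e u), y⟫ = _
        rw [hR]
      have hc : ⟪B n y, e u⟫ = (starRingEnd ℂ) ⟪e u, B n y⟫ :=
        (inner_conj_symm (B n y) (e u)).symm
      rw [hc, h3, RCLike.conj_mul, hg]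
      norm_cast
    rw [funext h2, inner_self_eq_norm_sq_to_K] at h
    exact Complex.hasSum_ofReal.mp (by convert h using 2; norm_cast; exact Complex.ofReal_pow _ _)
  -- finite sets of short words
  have hfin : ∀ n, {l : FreeMonoid (Fin d) | l.length < n}.Finite := fun n =>
    List.finite_length_lt (Fin d) n
  set S : ℕ → Finset (FreeMonoid (Fin d)) := fun n => (hfin n).toFinset with hS
  have hStend : Tendsto S atTop atTop := by
    rw [Filter.tendsto_atTop_atTop]
    intro T
    refine ⟨(T.sup FreeMonoid.length) + 1, fun n hn => ?_⟩
    intro l hl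
    rw [hS, Set.Finite.mem_toFinset]
    exact lt_of_le_of_lt (Finset.le_sup hl) (lt_of_lt_of_le (Nat.lt_succ_self _) hn)
  have htail : Tendsto (fun n => ∑' (v : {v // v ∉ S n}), g v) atTop (nhds 0) :=
    (tendsto_tsum_compl_atTop_zero g).comp hStend
  have hbound : ∀ n, ‖B n y‖ ^ 2 ≤ ∑' (v : {v // v ∉ S n}), g v := by
    intro n
    have hinj : Function.Injective (fun u : FreeMonoid (Fin d) => u * w n) :=
      mul_left_injective (w n)
    set i : FreeMonoid (Fin d) → {v // v ∉ S n} := fun u =>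
      ⟨u * w n, by
        rw [hS, Set.Finite.mem_toFinset]
        simp only [Set.mem_setOf_eq, not_lt, FreeMonoid.length_mul]
        exact le_add_self.trans (Nat.add_le_add_left (hw n) _)⟩ with hi
    have hiinj : Function.Injective i := by
      intro u v huv
      apply hinj
      simpa [hi] using congrArg Subtype.val huv
    have := tsum_comp_le_tsum_of_inj (f := fun v : {v // v ∉ S n} => g v.val)
      (hgsum.subtype _) (fun v => hg0 _) hiinj
    calc ‖B n y‖ ^ 2 = ∑' u, g (u * w n) := (hbreak n).tsum_eq.symm
      _ ≤ _ := this
  have hsq : Tendsto (fun n => ‖B n y‖ ^ 2) atTop (nhds 0) :=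
    squeeze_zero (fun n => sq_nonneg _) hbound htail
  have hBnorm : Tendsto (fun n => ‖B n y‖) atTop (nhds 0) := by
    have h := (Real.continuous_sqrt.tendsto 0).comp hsq
    have heq : ((Real.sqrt ∘ fun n => ‖B n y‖ ^ 2) : ℕ → ℝ) = fun n => ‖B n y‖ :=
      funext fun n => Real.sqrt_sq (norm_nonneg _)
    rw [heq] at h
    simpa using h
  rw [tendsto_zero_iff_norm_tendsto_zero]
  apply squeeze_zero (fun n => norm_nonneg _) (g := fun n => ‖ξ‖ * ‖B n y‖)
  · intro n
    rw [hadj n ξ]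
    exact norm_inner_le_norm _ _
  · simpa using tendsto_const_nhds.mul hBnorm


/-- The isometric part of Lemma 2.3 of the paper: on the full Fock space `F = ℓ²(F_d⁺)`
(presented abstractly via a Hilbert basis `e` indexed by the free monoid `F_d⁺` on `d`
generators, with left free shifts `L j` satisfying `L j (e w) = e (j·w)`), every element
`a + b*` of the free disc operator system `S_d` (with `a, b` in the norm-closed unital
algebra `A_d` generated by the shifts) is at distance `‖a + b*‖` from the compact
operators: `‖a + b* + K‖ ≥ ‖a + b*‖` for every compact operator `K`. -/
theorem stmt_5 (d : ℕ) (hd : 1 ≤ d)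
    (F : Type*) [NormedAddCommGroup F] [InnerProductSpace ℂ F] [CompleteSpace F]
    (e : HilbertBasis (FreeMonoid (Fin d)) ℂ F)
    (L : Fin d → F →L[ℂ] F)
    (hL : ∀ (j : Fin d) (w : FreeMonoid (Fin d)), L j (e w) = e (FreeMonoid.of j * w))
    (a b : F →L[ℂ] F)
    (ha : a ∈ (Algebra.adjoin ℂ (Set.range L)).topologicalClosure)
    (hb : b ∈ (Algebra.adjoin ℂ (Set.range L)).topologicalClosure)
    (K : F →L[ℂ] F) (hK : IsCompactOperator K) :
    ‖a + star b‖ ≤ ‖a + star b + K‖ := by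
  classical
  set j0 : Fin d := ⟨0, hd⟩ with hj0
  set w : ℕ → FreeMonoid (Fin d) := fun n => FreeMonoid.ofList (List.replicate n j0) with hwdef
  have hwlen : ∀ n, n ≤ (w n).length := by
    intro n
    show n ≤ (FreeMonoid.ofList (List.replicate n j0)).length
    show n ≤ (List.replicate n j0).length
    simp
  choose R hR using fun n => aux_R e (w n)
  set T : F →L[ℂ] F := a + star b with hT
  have hTinner : ∀ n (ξ η : F), ⟪T (R n ξ), R n η⟫ = ⟪T ξ, η⟫ := by
    intro n ξ η
    have hca := aux_comm e L hL (w n) (R n) (hR n) ha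
    have hcb := aux_comm e L hL (w n) (R n) (hR n) hb
    have hca' : ∀ v, a ((R n) v) = R n (a v) := by
      intro v
      have h := congrArg (fun f : F →L[ℂ] F => f v) hca.symm
      simpa [ContinuousLinearMap.mul_apply] using h
    have hcb' : ∀ v, b ((R n) v) = R n (b v) := by
      intro v
      have h := congrArg (fun f : F →L[ℂ] F => f v) hcb.symm
      simpa [ContinuousLinearMap.mul_apply] using h
    have hA : ⟪a (R n ξ), R n η⟫ = ⟪a ξ, η⟫ := by
      rw [hca' ξ, (R n).inner_map_map]
    have hB : ⟪(star b) (R n ξ), R n η⟫ = ⟪(star b) ξ, η⟫ := by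
      rw [ContinuousLinearMap.star_eq_adjoint, ContinuousLinearMap.adjoint_inner_left,
        hcb' η, (R n).inner_map_map, ← ContinuousLinearMap.adjoint_inner_left]
    rw [hT]
    simp only [ContinuousLinearMap.add_apply, inner_add_left, hA, hB]
  have hKw : ∀ ξ : F, Filter.Tendsto (fun n => ‖K (R n ξ)‖) Filter.atTop (nhds 0) := by
    intro ξ
    apply aux_compact_weak K hK _ ‖ξ‖
    · intro n
      rw [(R n).norm_map]
    · intro y
      exact aux_weak e w hwlen R hR ξ y
  have goal' : ∀ ξ : F, ‖T ξ‖ ≤ ‖T + K‖ * ‖ξ‖ := by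
    intro ξ
    by_cases h0 : T ξ = 0
    · rw [h0, norm_zero]
      positivity
    have hTn : (‖T ξ‖ : ℂ) ≠ 0 := by
      simp [norm_eq_zero, h0]
    set η : F := ((‖T ξ‖ : ℂ))⁻¹ • T ξ with hη
    have hηnorm : ‖η‖ = 1 := by
      rw [hη, norm_smul, norm_inv]
      simp only [Complex.norm_real, norm_norm]
      field_simp [norm_eq_zero, h0]
    have hinner : ⟪T ξ, η⟫ = ((‖T ξ‖ : ℝ) : ℂ) := by
      rw [hη, inner_smul_right, inner_self_eq_norm_sq_to_K]
      field_simp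
      ring
      rfl
    have key : ∀ n, ‖T ξ‖ ≤ ‖T + K‖ * ‖ξ‖ + ‖K (R n ξ)‖ := by
      intro n
      have h1 : ⟪T ξ, η⟫ = ⟪(T + K) (R n ξ), R n η⟫ - ⟪K (R n ξ), R n η⟫ := by
        rw [← hTinner n ξ η]
        simp only [ContinuousLinearMap.add_apply, inner_add_left]
        ring
      have h2 : ‖T ξ‖ = ‖⟪T ξ, η⟫‖ := by
        rw [hinner]
        simp
      rw [h2, h1]
      have h3 : ‖⟪(T + K) (R n ξ), R n η⟫‖ ≤ ‖T + K‖ * ‖ξ‖ := by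
        calc ‖⟪(T + K) (R n ξ), R n η⟫‖ ≤ ‖(T + K) (R n ξ)‖ * ‖R n η‖ :=
              norm_inner_le_norm _ _
          _ = ‖(T + K) (R n ξ)‖ := by rw [(R n).norm_map, hηnorm, mul_one]
          _ ≤ ‖T + K‖ * ‖R n ξ‖ := (T + K).le_opNorm _
          _ = ‖T + K‖ * ‖ξ‖ := by rw [(R n).norm_map]
      have h4 : ‖⟪K (R n ξ), R n η⟫‖ ≤ ‖K (R n ξ)‖ := by
        calc ‖⟪K (R n ξ), R n η⟫‖ ≤ ‖K (R n ξ)‖ * ‖R n η‖ := norm_inner_le_norm _ _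
          _ = ‖K (R n ξ)‖ := by rw [(R n).norm_map, hηnorm, mul_one]
      calc ‖⟪(T + K) (R n ξ), R n η⟫ - ⟪K (R n ξ), R n η⟫‖
          ≤ ‖⟪(T + K) (R n ξ), R n η⟫‖ + ‖⟪K (R n ξ), R n η⟫‖ := norm_sub_le _ _
        _ ≤ ‖T + K‖ * ‖ξ‖ + ‖K (R n ξ)‖ := add_le_add h3 h4
    have hlim : Filter.Tendsto (fun n => ‖T + K‖ * ‖ξ‖ + ‖K (R n ξ)‖) Filter.atTop
        (nhds (‖T + K‖ * ‖ξ‖)) := by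
      simpa using tendsto_const_nhds.add (hKw ξ)
    exact ge_of_tendsto' hlim key
  have hfinal := ContinuousLinearMap.opNorm_le_bound T (norm_nonneg (T + K)) goal'
  simpa [hT] using hfinal
end
end

section
/- Let d ≥ 2 be an integer. There exists a bounded linear functional φ : S_d → ℂ with the following properties: (i) φ(a) = 0 for every a ∈ A_d; (ii) φ((L_2 L_1^n)*) = 1 for every integer n ≥ 1; and (iii) the sequence (L_2 L_1^n)_{n≥1} converges to 0 in the weak operator topology, i.e. lim_{n→∞} ⟨L_2 L_1^n x, y⟩ = 0 for all x, y ∈ 𝔉²_d. In particular, φ annihilates A_d but does not admit a weak-* continuous extension to the weak-* closure of S_d. -/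
open Filter Finset FreeMonoid

set_option linter.unusedSectionVars false

namespace Stmt8Aux

local notation "⟪" x ", " y "⟫" => @inner ℂ _ _ x y

variable {d : ℕ}
variable {F : Type*} [NormedAddCommGroup F] [InnerProductSpace ℂ F] [CompleteSpace F]
variable {e : HilbertBasis (FreeMonoid (Fin d)) ℂ F}
variable {L : Fin d → F →L[ℂ] F}

theorem denseSpan (e : HilbertBasis (FreeMonoid (Fin d)) ℂ F) :
    Dense ((Submodule.span ℂ (Set.range ⇑e)) : Set F) :=
  Submodule.dense_iff_topologicalClosure_eq_top.mpr e.dense_span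

theorem ext0 {G : Type*} [NormedAddCommGroup G] [NormedSpace ℂ G]
    (f : F →L[ℂ] G) (h : ∀ w, f (e w) = 0) : f = 0 :=
  ContinuousLinearMap.ext_on (denseSpan e) (by rintro x ⟨w, rfl⟩; simpa using h w)

theorem inner_e_self (v : FreeMonoid (Fin d)) : ⟪e v, e v⟫ = 1 := by
  have h := e.orthonormal.1 v
  rw [@inner_self_eq_norm_sq_to_K ℂ, h]
  norm_num

theorem inner_e_ne {v w : FreeMonoid (Fin d)} (h : v ≠ w) : ⟪e v, e w⟫ = 0 :=
  e.orthonormal.2 h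

theorem inner_e (v w : FreeMonoid (Fin d)) [Decidable (v = w)] :
    ⟪e v, e w⟫ = if v = w then 1 else 0 := by
  split
  · next h => rw [h, inner_e_self]
  · next h => exact inner_e_ne h

end Stmt8Aux

namespace Stmt8Aux

variable {d : ℕ}
variable {F : Type*} [NormedAddCommGroup F] [InnerProductSpace ℂ F] [CompleteSpace F]
variable {e : HilbertBasis (FreeMonoid (Fin d)) ℂ F}
variable {L : Fin d → F →L[ℂ] F}

local notation "⟪" x ", " y "⟫" => @inner ℂ _ _ x y

variable (hL : ∀ (j : Fin d) (w : FreeMonoid (Fin d)), L j (e w) = e (FreeMonoid.of j * w))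

section Isometry
include hL

theorem inner_L_e (j : Fin d) (w : FreeMonoid (Fin d)) (y : F) :
    ⟪L j (e w), L j y⟫ = ⟪e w, y⟫ := by
  have h : (innerSL ℂ (L j (e w))).comp (L j) = innerSL ℂ (e w) := by
    apply ContinuousLinearMap.ext_on (denseSpan e)
    rintro x ⟨v, rfl⟩
    classical
    simp only [ContinuousLinearMap.coe_comp', Function.comp_apply, innerSL_apply_apply, hL, inner_e]
    by_cases hvw : w = v
    · simp [hvw]
    · rw [if_neg hvw, if_neg (fun hc => hvw (mul_left_cancel hc))]
  simpa using congrArg (fun f => f y) h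

theorem inner_L (j : Fin d) (x y : F) : ⟪L j x, L j y⟫ = ⟪x, y⟫ := by
  have h : (innerSL ℂ (L j y)).comp (L j) = innerSL ℂ y := by
    apply ContinuousLinearMap.ext_on (denseSpan e)
    rintro x ⟨w, rfl⟩
    simp only [ContinuousLinearMap.coe_comp', Function.comp_apply, innerSL_apply_apply]
    rw [← inner_conj_symm, inner_L_e hL, inner_conj_symm]
  have h2 := congrArg (fun f => f x) h
  simp only [ContinuousLinearMap.coe_comp', Function.comp_apply, innerSL_apply_apply] at h2
  rw [← inner_conj_symm, h2, inner_conj_symm]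

theorem norm_L (j : Fin d) (x : F) : ‖L j x‖ = ‖x‖ := by
  have h := inner_L hL j x x
  rw [@inner_self_eq_norm_sq_to_K ℂ, @inner_self_eq_norm_sq_to_K ℂ] at h
  have h2 : (‖L j x‖ : ℝ) ^ 2 = ‖x‖ ^ 2 := by exact_mod_cast h
  exact (sq_eq_sq₀ (norm_nonneg _) (norm_nonneg _)).mp h2

end Isometry

end Stmt8Aux

namespace Stmt8Aux

variable {d : ℕ}
variable {F : Type*} [NormedAddCommGroup F] [InnerProductSpace ℂ F] [CompleteSpace F]
variable {e : HilbertBasis (FreeMonoid (Fin d)) ℂ F}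
variable {L : Fin d → F →L[ℂ] F}

local notation "⟪" x ", " y "⟫" => @inner ℂ _ _ x y

variable (hL : ∀ (j : Fin d) (w : FreeMonoid (Fin d)), L j (e w) = e (FreeMonoid.of j * w))

section Words
include hL

theorem pow_L_e (i : Fin d) (n : ℕ) (w : FreeMonoid (Fin d)) :
    ((L i) ^ n) (e w) = e ((FreeMonoid.of i) ^ n * w) := by
  induction n generalizing w with
  | zero => simp
  | succ n ih =>
    rw [pow_succ, ContinuousLinearMap.mul_apply, hL, ih, ← mul_assoc, ← pow_succ]

theorem T_e (i1 i0 : Fin d) (n : ℕ) (w : FreeMonoid (Fin d)) :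
    (L i1 * (L i0) ^ n) (e w) = e (FreeMonoid.of i1 * ((FreeMonoid.of i0) ^ n * w)) := by
  rw [ContinuousLinearMap.mul_apply, pow_L_e hL, hL]

theorem norm_pow_L (i : Fin d) (n : ℕ) (x : F) : ‖((L i) ^ n) x‖ = ‖x‖ := by
  induction n generalizing x with
  | zero => simp
  | succ n ih => rw [pow_succ, ContinuousLinearMap.mul_apply, ih, norm_L hL]

theorem norm_T_apply (i1 i0 : Fin d) (n : ℕ) (x : F) : ‖(L i1 * (L i0) ^ n) x‖ = ‖x‖ := by
  rw [ContinuousLinearMap.mul_apply, norm_L hL, norm_pow_L hL]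

theorem norm_T_le (i1 i0 : Fin d) (n : ℕ) : ‖L i1 * (L i0) ^ n‖ ≤ 1 :=
  ContinuousLinearMap.opNorm_le_bound _ zero_le_one
    (fun x => by rw [norm_T_apply hL, one_mul])

end Words

theorem length_pow (i : Fin d) (n : ℕ) : ((FreeMonoid.of i) ^ n).length = n := by
  induction n with
  | zero => simp
  | succ n ih => rw [pow_succ, length_mul, ih, length_of]

theorem mem_pow {i m : Fin d} {n : ℕ} (h : m ∈ (FreeMonoid.of i) ^ n) : m = i := by
  induction n with
  | zero => exact absurd h (FreeMonoid.notMem_one)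
  | succ n ih =>
    rw [pow_succ, FreeMonoid.mem_mul] at h
    rcases h with h | h
    · exact ih h
    · exact FreeMonoid.mem_of.mp h

end Stmt8Aux

namespace Stmt8Aux

variable {d : ℕ}
variable {F : Type*} [NormedAddCommGroup F] [InnerProductSpace ℂ F] [CompleteSpace F]
variable {e : HilbertBasis (FreeMonoid (Fin d)) ℂ F}
variable {L : Fin d → F →L[ℂ] F}

local notation "⟪" x ", " y "⟫" => @inner ℂ _ _ x y

variable (hL : ∀ (j : Fin d) (w : FreeMonoid (Fin d)), L j (e w) = e (FreeMonoid.of j * w))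

section Adjoint
include hL

theorem adj_T_e_zero (i1 i0 : Fin d) (v : FreeMonoid (Fin d)) (n : ℕ) (hn : v.length ≤ n) :
    (ContinuousLinearMap.adjoint (L i1 * (L i0) ^ n)) (e v) = 0 := by
  set T := L i1 * (L i0) ^ n with hT
  have hf : (innerSL ℂ (e v)).comp T = 0 := by
    apply ext0
    intro w
    have hne : v ≠ FreeMonoid.of i1 * ((FreeMonoid.of i0) ^ n * w) := by
      intro hc
      have := congrArg FreeMonoid.length hc
      simp only [length_mul, length_of, length_pow] at this
      omega
    have h1 : ((innerSL ℂ (e v)).comp T) (e w) = ⟪e v, T (e w)⟫ := rfl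
    rw [h1, hT, T_e hL, inner_e_ne hne]
  have h2 : ⟪e v, T ((ContinuousLinearMap.adjoint T) (e v))⟫ = 0 := by
    have := congrArg (fun f => f ((ContinuousLinearMap.adjoint T) (e v))) hf
    simpa using this
  rw [← ContinuousLinearMap.adjoint_inner_left] at h2
  exact inner_self_eq_zero.mp h2

theorem norm_adj_T_le (i1 i0 : Fin d) (n : ℕ) :
    ‖ContinuousLinearMap.adjoint (L i1 * (L i0) ^ n)‖ ≤ 1 := by
  rw [LinearIsometryEquiv.norm_map]
  exact norm_T_le hL i1 i0 n

theorem eventually_adj_zero (i1 i0 : Fin d) {y' : F}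
    (hy' : y' ∈ Submodule.span ℂ (Set.range ⇑e)) :
    ∃ N : ℕ, ∀ n ≥ N, (ContinuousLinearMap.adjoint (L i1 * (L i0) ^ n)) y' = 0 := by
  induction hy' using Submodule.span_induction with
  | mem x hx =>
    obtain ⟨v, rfl⟩ := hx
    exact ⟨v.length, fun n hn => adj_T_e_zero hL i1 i0 v n hn⟩
  | zero => exact ⟨0, fun n _ => map_zero _⟩
  | add x z hx hz ihx ihz =>
    obtain ⟨N1, h1⟩ := ihx; obtain ⟨N2, h2⟩ := ihz
    exact ⟨max N1 N2, fun n hn => by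
      rw [map_add, h1 n (le_trans (le_max_left _ _) hn),
        h2 n (le_trans (le_max_right _ _) hn), add_zero]⟩
  | smul c x hx ihx =>
    obtain ⟨N, h⟩ := ihx
    exact ⟨N, fun n hn => by rw [map_smul, h n hn, smul_zero]⟩

theorem adj_T_tendsto (i1 i0 : Fin d) (y : F) :
    Tendsto (fun n : ℕ => (ContinuousLinearMap.adjoint (L i1 * (L i0) ^ n)) y)
      atTop (nhds 0) := by
  rw [NormedAddCommGroup.tendsto_nhds_zero]
  intro ε hε
  obtain ⟨y', hy', hdist⟩ : ∃ y' ∈ Submodule.span ℂ (Set.range ⇑e), dist y y' < ε / 2 := by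
    have := Metric.mem_closure_iff.mp ((denseSpan e).closure_eq ▸ Set.mem_univ y)
    exact this (ε / 2) (by positivity)
  obtain ⟨N, hN⟩ := eventually_adj_zero hL i1 i0 hy'
  filter_upwards [eventually_ge_atTop N] with n hn
  have : (ContinuousLinearMap.adjoint (L i1 * (L i0) ^ n)) y
      = (ContinuousLinearMap.adjoint (L i1 * (L i0) ^ n)) (y - y')
        + (ContinuousLinearMap.adjoint (L i1 * (L i0) ^ n)) y' := by
    rw [← map_add]; congr 1; abel
  rw [this, hN n hn, add_zero]
  calc ‖(ContinuousLinearMap.adjoint (L i1 * (L i0) ^ n)) (y - y')‖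
      ≤ ‖ContinuousLinearMap.adjoint (L i1 * (L i0) ^ n)‖ * ‖y - y'‖ :=
        ContinuousLinearMap.le_opNorm _ _
    _ ≤ 1 * ‖y - y'‖ := by
        apply mul_le_mul_of_nonneg_right (norm_adj_T_le hL i1 i0 n) (norm_nonneg _)
    _ < ε := by rw [one_mul, ← dist_eq_norm]; linarith

theorem wot_tendsto (i1 i0 : Fin d) (x y : F) :
    Tendsto (fun n : ℕ => ⟪(L i1 * (L i0) ^ n) x, y⟫) atTop (nhds 0) := by
  have h : ∀ n : ℕ, ⟪(L i1 * (L i0) ^ n) x, y⟫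
      = ⟪x, (ContinuousLinearMap.adjoint (L i1 * (L i0) ^ n)) y⟫ := fun n =>
    (ContinuousLinearMap.adjoint_inner_right _ _ _).symm
  simp only [h]
  have := Filter.Tendsto.inner (𝕜 := ℂ) (E := F)
    (tendsto_const_nhds (x := x) (f := atTop (α := ℕ))) (adj_T_tendsto hL i1 i0 y)
  simpa using this

end Adjoint

end Stmt8Aux

namespace Stmt8Aux

variable {d : ℕ}
variable {F : Type*} [NormedAddCommGroup F] [InnerProductSpace ℂ F] [CompleteSpace F]
variable {e : HilbertBasis (FreeMonoid (Fin d)) ℂ F}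
variable {L : Fin d → F →L[ℂ] F}

local notation "⟪" x ", " y "⟫" => @inner ℂ _ _ x y

variable (hL : ∀ (j : Fin d) (w : FreeMonoid (Fin d)), L j (e w) = e (FreeMonoid.of j * w))

section KSpace

/-- The closed subspace spanned by basis vectors indexed by words containing `i1`. -/
noncomputable def K (e : HilbertBasis (FreeMonoid (Fin d)) ℂ F) (i1 : Fin d) : Submodule ℂ F :=
  (Submodule.span ℂ (⇑e '' {v | i1 ∈ v})).topologicalClosure

include hL in
theorem maps_K (i1 : Fin d) {a : F →L[ℂ] F}
    (ha : a ∈ (Algebra.adjoin ℂ (Set.range L)).topologicalClosure)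
    {x : F} (hx : x ∈ K e i1) : a x ∈ K e i1 := by
  set C : Set (F →L[ℂ] F) := {S | ∀ z ∈ K e i1, S z ∈ K e i1} with hC
  have hKclosed : IsClosed ((K e i1 : Submodule ℂ F) : Set F) :=
    Submodule.isClosed_topologicalClosure _
  have hCclosed : IsClosed C := by
    have : C = ⋂ z ∈ (K e i1 : Submodule ℂ F), (fun S : F →L[ℂ] F => S z) ⁻¹' (K e i1) := by
      ext S; simp [hC]
    rw [this]
    refine isClosed_biInter fun z hz => IsClosed.preimage ?_ hKclosed
    exact (ContinuousLinearMap.apply ℂ F z).continuous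
  have hmemC : ∀ S ∈ (Algebra.adjoin ℂ (Set.range L) : Subalgebra ℂ (F →L[ℂ] F)), S ∈ C := by
    intro S hS
    induction hS using Algebra.adjoin_induction with
    | mem S hS =>
      obtain ⟨j, rfl⟩ := hS
      intro z hz
      have hmapsto : Set.MapsTo (L j)
          ((Submodule.span ℂ (⇑e '' {v | i1 ∈ v}) : Submodule ℂ F) : Set F)
          ((Submodule.span ℂ (⇑e '' {v | i1 ∈ v}) : Submodule ℂ F) : Set F) := by
        intro u hu
        induction hu using Submodule.span_induction with
        | mem u hu =>
          obtain ⟨v, hv, rfl⟩ := hu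
          rw [hL]
          exact Submodule.subset_span ⟨FreeMonoid.of j * v, by
            simpa [FreeMonoid.mem_mul] using Or.inr hv, rfl⟩
        | zero => simpa using Submodule.zero_mem _
        | add u w _ _ ihu ihw => rw [map_add]; exact Submodule.add_mem _ ihu ihw
        | smul c u _ ihu => rw [map_smul]; exact Submodule.smul_mem _ _ ihu
      have hz' : z ∈ closure ((Submodule.span ℂ (⇑e '' {v | i1 ∈ v}) : Submodule ℂ F) : Set F) := by
        rw [← Submodule.topologicalClosure_coe]; exact hz
      have := map_mem_closure (L j).continuous hz' hmapsto
      rw [← Submodule.topologicalClosure_coe] at this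
      exact this
    | algebraMap r =>
      intro z hz
      have : (algebraMap ℂ (F →L[ℂ] F) r) z = r • z := by
        rw [Algebra.algebraMap_eq_smul_one, ContinuousLinearMap.smul_apply,
          ContinuousLinearMap.one_apply]
      rw [this]
      exact Submodule.smul_mem _ _ hz
    | add a b _ _ iha ihb =>
      intro z hz
      rw [ContinuousLinearMap.add_apply]
      exact Submodule.add_mem _ (iha z hz) (ihb z hz)
    | mul a b _ _ iha ihb =>
      intro z hz
      rw [ContinuousLinearMap.mul_apply]
      exact iha _ (ihb z hz)
  have ha' : a ∈ closure ((Algebra.adjoin ℂ (Set.range L) : Subalgebra ℂ (F →L[ℂ] F)) : Set _) := by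
    rw [← Subalgebra.topologicalClosure_coe]; exact ha
  exact (closure_minimal hmemC hCclosed ha') x hx

theorem H_orth {i1 : Fin d} (i0 : Fin d) (hne : i1 ≠ i0) (j : ℕ) {z : F} (hz : z ∈ K e i1) :
    ⟪e ((FreeMonoid.of i0) ^ j), z⟫ = 0 := by
  set f : F →L[ℂ] ℂ := innerSL ℂ (e ((FreeMonoid.of i0) ^ j)) with hf
  have hker : K e i1 ≤ f.ker := by
    apply Submodule.topologicalClosure_minimal
    · rw [Submodule.span_le]
      rintro _ ⟨v, hv, rfl⟩
      have hvne : (FreeMonoid.of i0) ^ j ≠ v := by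
        intro hc
        exact hne (mem_pow (hc ▸ hv))
      simp only [SetLike.mem_coe, LinearMap.mem_ker, hf, innerSL_apply_apply]
      exact inner_e_ne hvne
    · exact ContinuousLinearMap.isClosed_ker f
  have := hker hz
  rw [LinearMap.mem_ker] at this
  exact this

end KSpace

end Stmt8Aux

namespace Stmt8Aux

variable {d : ℕ}
variable {F : Type*} [NormedAddCommGroup F] [InnerProductSpace ℂ F] [CompleteSpace F]
variable {e : HilbertBasis (FreeMonoid (Fin d)) ℂ F}
variable {L : Fin d → F →L[ℂ] F}

local notation "⟪" x ", " y "⟫" => @inner ℂ _ _ x y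

variable (hL : ∀ (j : Fin d) (w : FreeMonoid (Fin d)), L j (e w) = e (FreeMonoid.of j * w))

section GH

/-- `G e i1 i0 N = ∑_{k=1}^N e_{i1 i0^k}`. -/
noncomputable def G (e : HilbertBasis (FreeMonoid (Fin d)) ℂ F) (i1 i0 : Fin d) (N : ℕ) : F :=
  ∑ k ∈ Icc 1 N, e (FreeMonoid.of i1 * (FreeMonoid.of i0) ^ k)

/-- `H e i0 N = ∑_{j=1}^N e_{i0^j}`. -/
noncomputable def H (e : HilbertBasis (FreeMonoid (Fin d)) ℂ F) (i0 : Fin d) (N : ℕ) : F :=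
  ∑ j ∈ Icc 1 N, e ((FreeMonoid.of i0) ^ j)

theorem inner_sum_e {s : Finset ℕ} {w : ℕ → FreeMonoid (Fin d)}
    (hw : Function.Injective w) :
    ⟪∑ k ∈ s, e (w k), ∑ k ∈ s, e (w k)⟫ = (s.card : ℂ) := by
  classical
  rw [sum_inner]
  have : ∀ k ∈ s, ⟪e (w k), ∑ j ∈ s, e (w j)⟫ = 1 := by
    intro k hk
    rw [inner_sum]
    have : ∀ j ∈ s, ⟪e (w k), e (w j)⟫ = if j = k then 1 else 0 := by
      intro j hj
      by_cases h : j = k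
      · rw [if_pos h, h, inner_e_self]
      · rw [if_neg h, inner_e_ne (fun hc => h (hw hc.symm))]
    rw [Finset.sum_congr rfl this, Finset.sum_ite_eq' s k (fun _ => (1:ℂ)), if_pos hk]
  rw [Finset.sum_congr rfl this, Finset.sum_const, nsmul_eq_mul, mul_one]

theorem norm_sum_e {s : Finset ℕ} {w : ℕ → FreeMonoid (Fin d)}
    (hw : Function.Injective w) :
    ‖∑ k ∈ s, e (w k)‖ = Real.sqrt s.card := by
  rw [@norm_eq_sqrt_re_inner ℂ, inner_sum_e hw]
  norm_num

theorem injective_pow_word (i0 : Fin d) : Function.Injective (fun k => (FreeMonoid.of i0) ^ k) := by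
  intro a b hab
  have := congrArg FreeMonoid.length hab
  simpa [length_pow] using this

theorem injective_word (i1 i0 : Fin d) :
    Function.Injective (fun k => FreeMonoid.of i1 * (FreeMonoid.of i0) ^ k) := by
  intro a b hab
  have := congrArg FreeMonoid.length hab
  simpa [length_pow] using this

theorem norm_G (i1 i0 : Fin d) (N : ℕ) : ‖G e i1 i0 N‖ = Real.sqrt N := by
  rw [G, norm_sum_e (injective_word i1 i0), Nat.card_Icc]
  norm_num

theorem norm_H (i0 : Fin d) (N : ℕ) : ‖H e i0 N‖ = Real.sqrt N := by
  rw [H, norm_sum_e (injective_pow_word i0), Nat.card_Icc]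
  norm_num

/-- The fundamental bound `|N⁻¹ ⟪H N, T G N⟫| ≤ ‖T‖`. -/
theorem psi_bound (i1 i0 : Fin d) (N : ℕ) (T : F →L[ℂ] F) :
    ‖((N : ℂ))⁻¹ * ⟪H e i0 N, T (G e i1 i0 N)⟫‖ ≤ ‖T‖ := by
  rcases Nat.eq_zero_or_pos N with hN | hN
  · subst hN; simp
  calc ‖((N : ℂ))⁻¹ * ⟪H e i0 N, T (G e i1 i0 N)⟫‖
      = (N : ℝ)⁻¹ * ‖⟪H e i0 N, T (G e i1 i0 N)⟫‖ := by
        rw [norm_mul]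
        norm_num
    _ ≤ (N : ℝ)⁻¹ * (‖H e i0 N‖ * (‖T‖ * ‖G e i1 i0 N‖)) := by
        apply mul_le_mul_of_nonneg_left _ (by positivity)
        exact le_trans (norm_inner_le_norm _ _)
          (mul_le_mul_of_nonneg_left (T.le_opNorm _) (norm_nonneg _))
    _ = (N : ℝ)⁻¹ * ((N : ℝ) * ‖T‖) := by
        rw [norm_G, norm_H]
        rw [show Real.sqrt N * (‖T‖ * Real.sqrt N) = Real.sqrt N * Real.sqrt N * ‖T‖ by ring,
          Real.mul_self_sqrt (Nat.cast_nonneg N)]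
    _ = ‖T‖ := by
        field_simp
end GH

end Stmt8Aux

namespace Stmt8Aux

variable {d : ℕ}
variable {F : Type*} [NormedAddCommGroup F] [InnerProductSpace ℂ F] [CompleteSpace F]
variable {e : HilbertBasis (FreeMonoid (Fin d)) ℂ F}
variable {L : Fin d → F →L[ℂ] F}

local notation "⟪" x ", " y "⟫" => @inner ℂ _ _ x y

variable (hL : ∀ (j : Fin d) (w : FreeMonoid (Fin d)), L j (e w) = e (FreeMonoid.of j * w))

section Values

theorem G_mem_K (i1 i0 : Fin d) (N : ℕ) : G e i1 i0 N ∈ K e i1 := by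
  apply Submodule.sum_mem
  intro k _
  apply Submodule.le_topologicalClosure
  apply Submodule.subset_span
  exact ⟨FreeMonoid.of i1 * (FreeMonoid.of i0) ^ k, by
    simp [FreeMonoid.mem_mul, FreeMonoid.mem_of_self], rfl⟩

include hL in
theorem psi_alg (i1 i0 : Fin d) (hne : i1 ≠ i0) {a : F →L[ℂ] F}
    (ha : a ∈ (Algebra.adjoin ℂ (Set.range L)).topologicalClosure) (N : ℕ) :
    ⟪H e i0 N, a (G e i1 i0 N)⟫ = 0 := by
  have hmem : a (G e i1 i0 N) ∈ K e i1 := maps_K hL i1 ha (G_mem_K i1 i0 N)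
  rw [H, sum_inner]
  apply Finset.sum_eq_zero
  intro j _
  exact H_orth i0 hne j hmem

include hL in
theorem psi_adj (i1 i0 : Fin d) (n N : ℕ) (hn : 1 ≤ n) :
    ⟪H e i0 N, (ContinuousLinearMap.adjoint (L i1 * (L i0) ^ n)) (G e i1 i0 N)⟫
      = ((N - n : ℕ) : ℂ) := by
  classical
  rw [ContinuousLinearMap.adjoint_inner_right]
  have hTH : (L i1 * (L i0) ^ n) (H e i0 N)
      = ∑ j ∈ Icc 1 N, e (FreeMonoid.of i1 * (FreeMonoid.of i0) ^ (n + j)) := by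
    rw [H, map_sum]
    apply Finset.sum_congr rfl
    intro j _
    rw [T_e hL]
    congr 2
    rw [← pow_add]
  rw [hTH, sum_inner]
  have hrow : ∀ j ∈ Icc 1 N,
      ⟪e (FreeMonoid.of i1 * (FreeMonoid.of i0) ^ (n + j)), G e i1 i0 N⟫
        = if n + j ≤ N then (1 : ℂ) else 0 := by
    intro j hj
    rw [G, inner_sum]
    have : ∀ k ∈ Icc 1 N,
        ⟪e (FreeMonoid.of i1 * (FreeMonoid.of i0) ^ (n + j)),
          e (FreeMonoid.of i1 * (FreeMonoid.of i0) ^ k)⟫ = if k = n + j then 1 else 0 := by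
      intro k _
      by_cases h : k = n + j
      · rw [if_pos h, h, inner_e_self]
      · rw [if_neg h, inner_e_ne (fun hc => h (injective_word i1 i0 hc).symm)]
    rw [Finset.sum_congr rfl this, Finset.sum_ite_eq' (Icc 1 N) (n + j) (fun _ => (1:ℂ))]
    simp only [Finset.mem_Icc] at hj ⊢
    by_cases hcase : n + j ≤ N
    · rw [if_pos ⟨by omega, hcase⟩, if_pos hcase]
    · rw [if_neg (by omega), if_neg hcase]
  rw [Finset.sum_congr rfl hrow, Finset.sum_ite, Finset.sum_const_zero, add_zero,
    Finset.sum_const, nsmul_eq_mul, mul_one]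
  congr 1
  have : Finset.filter (fun j => n + j ≤ N) (Icc 1 N) = Icc 1 (N - n) := by
    ext j
    simp only [Finset.mem_filter, Finset.mem_Icc]
    omega
  rw [this, Nat.card_Icc]
  omega

end Values

end Stmt8Aux

open Stmt8Aux in
/-- Example 5.2 of the paper, packaged: for `d ≥ 2`, on the Fock space `F = ℓ²(F_d⁺)`
with left free shifts `L j`, there is a bounded linear functional `φ` on the free disc
operator system `S_d` (the norm closure of `{a + b* : a, b ∈ A_d}`, where `A_d` is the
norm-closed unital algebra generated by the shifts) such that `φ` annihilates `A_d`,
`φ((L₂ L₁ⁿ)*) = 1` for all `n ≥ 1`, while `L₂ L₁ⁿ → 0` in the weak operator topology.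
In particular `φ` admits no weak-* continuous extension to the weak-* closure of `S_d`.
(The generators `L₁, L₂` of the paper are `L ⟨0, _⟩, L ⟨1, _⟩`.) -/
theorem stmt_8 (d : ℕ) (hd : 2 ≤ d)
    (F : Type*) [NormedAddCommGroup F] [InnerProductSpace ℂ F] [CompleteSpace F]
    (e : HilbertBasis (FreeMonoid (Fin d)) ℂ F)
    (L : Fin d → F →L[ℂ] F)
    (hL : ∀ (j : Fin d) (w : FreeMonoid (Fin d)), L j (e w) = e (FreeMonoid.of j * w)) :
    ∃ φ : ↥((Submodule.span ℂ
        {x : F →L[ℂ] F | ∃ a ∈ (Algebra.adjoin ℂ (Set.range L)).topologicalClosure,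
          ∃ b ∈ (Algebra.adjoin ℂ (Set.range L)).topologicalClosure,
          x = a + star b}).topologicalClosure) →L[ℂ] ℂ,
      (∀ (a : F →L[ℂ] F), a ∈ (Algebra.adjoin ℂ (Set.range L)).topologicalClosure →
        ∀ ha : a ∈ (Submodule.span ℂ
          {x : F →L[ℂ] F | ∃ a ∈ (Algebra.adjoin ℂ (Set.range L)).topologicalClosure,
            ∃ b ∈ (Algebra.adjoin ℂ (Set.range L)).topologicalClosure,
            x = a + star b}).topologicalClosure,
          φ ⟨a, ha⟩ = 0) ∧
      (∀ n : ℕ, 1 ≤ n →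
        ∀ h : star (L ⟨1, by omega⟩ * (L ⟨0, by omega⟩) ^ n) ∈ (Submodule.span ℂ
          {x : F →L[ℂ] F | ∃ a ∈ (Algebra.adjoin ℂ (Set.range L)).topologicalClosure,
            ∃ b ∈ (Algebra.adjoin ℂ (Set.range L)).topologicalClosure,
            x = a + star b}).topologicalClosure,
          φ ⟨star (L ⟨1, by omega⟩ * (L ⟨0, by omega⟩) ^ n), h⟩ = 1) ∧
      (∀ x y : F,
        Tendsto (fun n : ℕ => (inner ℂ ((L ⟨1, by omega⟩ * (L ⟨0, by omega⟩) ^ n) x) y : ℂ))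
          atTop (nhds 0)) := by
  classical
  have h1d : 1 < d := by omega
  have h0d : 0 < d := by omega
  set i1 : Fin d := ⟨1, h1d⟩ with hi1
  set i0 : Fin d := ⟨0, h0d⟩ with hi0
  have hne : i1 ≠ i0 := by simp [hi1, hi0, Fin.ext_iff]
  set SM : Submodule ℂ (F →L[ℂ] F) := (Submodule.span ℂ
      {x : F →L[ℂ] F | ∃ a ∈ (Algebra.adjoin ℂ (Set.range L)).topologicalClosure,
        ∃ b ∈ (Algebra.adjoin ℂ (Set.range L)).topologicalClosure,
        x = a + star b}).topologicalClosure with hSM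
  set U : Ultrafilter ℕ := Ultrafilter.of atTop with hU
  have hUle : (U : Filter ℕ) ≤ atTop := Ultrafilter.of_le atTop
  set ψ : ℕ → SM → ℂ := fun N s =>
    ((N : ℂ))⁻¹ * (inner ℂ (H e i0 N) ((s : F →L[ℂ] F) (G e i1 i0 N)) : ℂ) with hψ
  have hψbound : ∀ N s, ‖ψ N s‖ ≤ ‖s‖ := fun N s => psi_bound i1 i0 N _
  have hex : ∀ s : SM, ∃ c : ℂ, Tendsto (fun N => ψ N s) U (nhds c) := by
    intro s
    have h1 : (U.map (fun N => ψ N s) : Filter ℂ) ≤ 𝓟 (Metric.closedBall 0 ‖s‖) := by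
      rw [Filter.le_principal_iff]
      apply Filter.mem_map.mpr
      apply Filter.univ_mem'
      intro N
      simpa [Metric.mem_closedBall, dist_zero_right] using hψbound N s
    obtain ⟨c, _, hc⟩ := (isCompact_closedBall (0:ℂ) ‖s‖).ultrafilter_le_nhds (U.map _) h1
    exact ⟨c, hc⟩
  choose lim hlim using hex
  have hadd : ∀ s t, lim (s + t) = lim s + lim t := by
    intro s t
    refine tendsto_nhds_unique (hlim (s + t)) ?_
    have heq : (fun N => ψ N (s + t)) = fun N => ψ N s + ψ N t := by
      funext N
      simp only [hψ, Submodule.coe_add, ContinuousLinearMap.add_apply, inner_add_right]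
      ring
    rw [heq]
    exact (hlim s).add (hlim t)
  have hsmul : ∀ (c : ℂ) s, lim (c • s) = c * lim s := by
    intro c s
    refine tendsto_nhds_unique (hlim (c • s)) ?_
    have heq : (fun N => ψ N (c • s)) = fun N => c * ψ N s := by
      funext N
      simp only [hψ, Submodule.coe_smul, ContinuousLinearMap.smul_apply, inner_smul_right]
      ring
    rw [heq]
    exact (hlim s).const_mul c
  set φlin : SM →ₗ[ℂ] ℂ :=
    { toFun := lim, map_add' := hadd, map_smul' := hsmul } with hφlin
  have hφbound : ∀ s, ‖φlin s‖ ≤ 1 * ‖s‖ := by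
    intro s
    rw [one_mul]
    exact le_of_tendsto (hlim s).norm (Eventually.of_forall fun N => hψbound N s)
  refine ⟨φlin.mkContinuous 1 hφbound, ?_, ?_, ?_⟩
  · intro a haA haS
    refine tendsto_nhds_unique (hlim ⟨a, haS⟩) ?_
    have heq : (fun N => ψ N ⟨a, haS⟩) = fun N => 0 := by
      funext N
      simp only [hψ]
      rw [psi_alg hL i1 i0 hne haA N, mul_zero]
    rw [heq]
    exact tendsto_const_nhds
  · intro n hn h
    refine tendsto_nhds_unique (hlim ⟨_, h⟩) ?_
    have heq : (fun N => ψ N ⟨_, h⟩) = fun N : ℕ => ((N : ℂ))⁻¹ * ((N - n : ℕ) : ℂ) := by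
      funext N
      simp only [hψ]
      congr 1
      have hstar : (star (L i1 * (L i0) ^ n) : F →L[ℂ] F)
          = ContinuousLinearMap.adjoint (L i1 * (L i0) ^ n) :=
        ContinuousLinearMap.star_eq_adjoint _
      exact hstar ▸ psi_adj hL i1 i0 n N hn
    rw [heq]
    have hinv : Tendsto (fun N : ℕ => ((N : ℂ))⁻¹) atTop (nhds 0) := by
      have h0 : Tendsto (fun N : ℕ => (((N : ℝ)⁻¹ : ℝ) : ℂ)) atTop (nhds ((0 : ℝ) : ℂ)) :=
        (Complex.continuous_ofReal.tendsto 0).comp tendsto_inv_atTop_nhds_zero_nat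
      simpa using h0
    have htend : Tendsto (fun N : ℕ => ((N : ℂ))⁻¹ * ((N - n : ℕ) : ℂ)) atTop (nhds 1) := by
      have heq2 : (fun N : ℕ => ((N : ℂ))⁻¹ * ((N - n : ℕ) : ℂ))
          =ᶠ[atTop] fun N : ℕ => 1 - (n : ℂ) * ((N : ℂ))⁻¹ := by
        filter_upwards [eventually_ge_atTop (max n 1)] with N hN
        have hNn : n ≤ N := le_trans (le_max_left _ _) hN
        have hN0 : (N : ℂ) ≠ 0 := by
          have : 1 ≤ N := le_trans (le_max_right _ _) hN
          exact_mod_cast Nat.cast_ne_zero.mpr (by omega)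
        rw [Nat.cast_sub hNn]
        field_simp
      rw [Filter.tendsto_congr' heq2]
      have := (tendsto_const_nhds (x := (1:ℂ)) (f := atTop (α := ℕ))).sub
        (hinv.const_mul (n : ℂ))
      simpa using this
    exact htend.mono_left hUle
  · intro x y
    exact wot_tendsto hL i1 i0 x y
end

section
/- Let d ≥ 1 be an integer, let V_1, …, V_d be isometries with pairwise orthogonal ranges on a complex Hilbert space H, and let A ⊆ B(H) be the unital C*-subalgebra they generate. Let K ⊆ H be a closed subspace with orthogonal projection P_K, and suppose that each compression W_j = P_K V_j|_K is an isometry of K and that Σ_{j=1}^d W_j W_j* = I_K. Then K is reducing for A: tK ⊆ K and t*K ⊆ K for every t ∈ A. -/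
open scoped InnerProductSpace

/-- The star subalgebra of operators leaving `K` and `Kᗮ`-wise reducing, i.e. `t K ⊆ K`
and `t* K ⊆ K`. -/
def reducingAlg (H : Type*) [NormedAddCommGroup H] [InnerProductSpace ℂ H] [CompleteSpace H]
    (K : Submodule ℂ H) : StarSubalgebra ℂ (H →L[ℂ] H) where
  carrier := {t | (∀ x ∈ K, t x ∈ K) ∧ (∀ x ∈ K, star t x ∈ K)}
  mul_mem' := by
    rintro a b ⟨ha1, ha2⟩ ⟨hb1, hb2⟩
    refine ⟨fun x hx => ha1 _ (hb1 x hx), fun x hx => ?_⟩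
    simpa [star_mul] using hb2 _ (ha2 x hx)
  add_mem' := by
    rintro a b ⟨ha1, ha2⟩ ⟨hb1, hb2⟩
    exact ⟨fun x hx => K.add_mem (ha1 x hx) (hb1 x hx),
      fun x hx => by simpa using K.add_mem (ha2 x hx) (hb2 x hx)⟩
  algebraMap_mem' := fun c =>
    ⟨fun x hx => by
      simpa [Algebra.algebraMap_eq_smul_one] using K.smul_mem c hx,
     fun x hx => by
      simpa [Algebra.algebraMap_eq_smul_one, star_smul] using
        K.smul_mem (starRingEnd ℂ c) hx⟩
  star_mem' := by
    rintro a ⟨ha1, ha2⟩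
    exact ⟨ha2, by simpa using ha1⟩

/-- The claim inside the proof of Lemma 4.3 of the paper: let `V₁, …, V_d` be isometries
with pairwise orthogonal ranges on `H`, let `A` be the unital C*-algebra they generate
(formalized as the topological closure of the generated star-subalgebra), and let `K` be
a closed subspace with orthogonal projection `P` (characterized by `P x ∈ K` and
`x - P x ∈ Kᗮ`).  If each compression `W j = P V j |_K` is an isometry of `K` and
`∑ j, W j (W j)* = I_K` (the compressions form a Cuntz family on `K`), then `K` is
reducing for `A`: `t K ⊆ K` and `t* K ⊆ K` for every `t ∈ A`.  (Note
`(W j)* y = P (V j)* y` for `y ∈ K`, so the Cuntz identity reads as below.) -/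
theorem stmt_10 (d : ℕ) (hd : 1 ≤ d)
    (H : Type*) [NormedAddCommGroup H] [InnerProductSpace ℂ H] [CompleteSpace H]
    (V : Fin d → H →L[ℂ] H)
    (horth : ∀ i j : Fin d, star (V i) * V j = if i = j then 1 else 0)
    (K : Submodule ℂ H) (hK : IsClosed (K : Set H))
    (P : H →L[ℂ] H)
    (hP : ∀ x : H, P x ∈ K ∧ x - P x ∈ Kᗮ)
    (hWiso : ∀ j : Fin d, ∀ x ∈ K, ‖P (V j x)‖ = ‖x‖)
    (hWcuntz : ∀ x ∈ K, ∑ j : Fin d, P (V j (P (star (V j) x))) = x) :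
    ∀ t ∈ (StarAlgebra.adjoin ℂ (Set.range V)).topologicalClosure,
      (∀ x ∈ K, t x ∈ K) ∧ (∀ x ∈ K, star t x ∈ K) := by
  -- P fixes K pointwise
  have hPfix : ∀ x ∈ K, P x = x := by
    intro x hx
    have h1 : x - P x ∈ K := K.sub_mem hx (hP x).1
    have h2 : x - P x ∈ Kᗮ := (hP x).2
    have : ⟪x - P x, x - P x⟫_ℂ = 0 :=
      Submodule.inner_right_of_mem_orthogonal h1 h2
    have := inner_self_eq_zero.mp this
    have : x = P x := by rwa [sub_eq_zero] at this
    exact this.symm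
  -- each V j is an isometry
  have hViso : ∀ (j : Fin d) (x : H), ‖V j x‖ = ‖x‖ := by
    intro j x
    have h := horth j j
    simp only [if_pos rfl] at h
    have : ⟪V j x, V j x⟫_ℂ = ⟪x, x⟫_ℂ := by
      rw [← ContinuousLinearMap.adjoint_inner_left, ← ContinuousLinearMap.star_eq_adjoint]
      have : star (V j) (V j x) = x := by
        have := congrArg (fun T : H →L[ℂ] H => T x) h
        simpa using this
      rw [this]
    have h1 : ‖V j x‖ * ‖V j x‖ = ‖x‖ * ‖x‖ := by
      have h2 := congrArg (RCLike.re (K := ℂ)) this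
      simpa only [inner_self_eq_norm_mul_norm] using h2
    exact (mul_self_inj_of_nonneg (norm_nonneg _) (norm_nonneg _)).mp h1
  -- K is invariant under V j
  have hVK : ∀ (j : Fin d), ∀ x ∈ K, V j x ∈ K := by
    intro j x hx
    have hpyth : ‖V j x‖ * ‖V j x‖ = ‖P (V j x)‖ * ‖P (V j x)‖
        + ‖V j x - P (V j x)‖ * ‖V j x - P (V j x)‖ := by
      have horthog : ⟪P (V j x), V j x - P (V j x)⟫_ℂ = 0 :=
        Submodule.inner_right_of_mem_orthogonal (hP (V j x)).1 (hP (V j x)).2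
      have := norm_add_sq_eq_norm_sq_add_norm_sq_of_inner_eq_zero
        (𝕜 := ℂ) (P (V j x)) (V j x - P (V j x)) horthog
      simpa using this
    have heq : ‖P (V j x)‖ = ‖V j x‖ := by rw [hWiso j x hx, hViso j x]
    have hz : ‖V j x - P (V j x)‖ * ‖V j x - P (V j x)‖ = 0 := by
      rw [heq] at hpyth; linarith
    have : V j x - P (V j x) = 0 := by
      have := mul_self_eq_zero.mp hz
      exact norm_eq_zero.mp this
    have : V j x = P (V j x) := by rwa [sub_eq_zero] at this
    rw [this]; exact (hP (V j x)).1
  -- K is invariant under star (V j)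
  have hVsK : ∀ (j : Fin d), ∀ x ∈ K, star (V j) x ∈ K := by
    intro i x hx
    have hsum : ∑ j : Fin d, V j (P (star (V j) x)) = x := by
      have heq : ∑ j : Fin d, V j (P (star (V j) x))
          = ∑ j : Fin d, P (V j (P (star (V j) x))) :=
        Finset.sum_congr rfl fun j _ =>
          (hPfix _ (hVK j _ (hP (star (V j) x)).1)).symm
      rw [heq, hWcuntz x hx]
    have : star (V i) x = ∑ j : Fin d, star (V i) (V j (P (star (V j) x))) := by
      rw [← map_sum, hsum]
    rw [this]
    have hterm : ∀ j : Fin d, star (V i) (V j (P (star (V j) x)))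
        = if i = j then P (star (V j) x) else 0 := by
      intro j
      have := congrArg (fun T : H →L[ℂ] H => T (P (star (V j) x))) (horth i j)
      by_cases hij : i = j <;> simpa [hij] using this
    rw [Finset.sum_congr rfl fun j _ => hterm j]
    simp only [Finset.sum_ite_eq, Finset.mem_univ, if_pos]
    exact (hP (star (V i) x)).1
  -- the reducing operators form a closed star subalgebra containing the V j
  have hclosed : IsClosed ((reducingAlg H K : Set (H →L[ℂ] H))) := by
    have h1 : IsClosed {t : H →L[ℂ] H | ∀ x ∈ K, t x ∈ K} := by
      have : {t : H →L[ℂ] H | ∀ x ∈ K, t x ∈ K}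
          = ⋂ x : K, (fun t : H →L[ℂ] H => t x) ⁻¹' K := by
        ext t; simp [Set.mem_iInter]
      rw [this]
      exact isClosed_iInter fun x =>
        hK.preimage (ContinuousLinearMap.apply ℂ H (x : H)).continuous
    have h2 : IsClosed {t : H →L[ℂ] H | ∀ x ∈ K, star t x ∈ K} := by
      have : {t : H →L[ℂ] H | ∀ x ∈ K, star t x ∈ K}
          = star ⁻¹' {t : H →L[ℂ] H | ∀ x ∈ K, t x ∈ K} := rfl
      rw [this]
      exact h1.preimage continuous_star
    exact h1.inter h2
  have hle : StarAlgebra.adjoin ℂ (Set.range V) ≤ reducingAlg H K := by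
    rw [StarAlgebra.adjoin_le_iff]
    rintro _ ⟨j, rfl⟩
    exact ⟨hVK j, hVsK j⟩
  intro t ht
  exact StarSubalgebra.topologicalClosure_minimal hle hclosed ht
end
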